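/- arXiv:2402.07941 — 3 statements merged into one kernel-verified Lean document; each statement's English description precedes it below -/
import Mathlib

section
/- Let k ≥ 0, Q ≥ 1, q ≥ 2 and N be integers with gcd(q,Q)=1 and N ≥ 2q, and let a be an integer coprime to q. Then V_k(Q;q,a) = Σ_{(r_1,…,r_k)} ∏_{i=1}^k (μ(r_i)/φ(r_i)) · Σ_{(b_1,…,b_k)} ∏_{i=1}^k E_{q,a}(b_i/r_i), where the outer sum runs over all k-tuples of divisors r_i of Q with r_i > 1, the inner sum runs over all k-tuples of residues b_i mod r_i with gcd(b_i,r_i)=1 and b_1/r_1 + ⋯ + b_k/r_k ∈ ℤ, and μ is the Möbius function. -/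
open Finset Filter

/-- Integers `1 ≤ n ≤ N` with `n ≡ a (mod q)`. -/
def progSet (N q a : ℕ) : Finset ℕ := (Finset.Icc 1 N).filter (fun n => n % q = a % q)

/-- The exponential sum `E_{q,a}(α) = Σ_{1≤n≤N, n≡a (q)} e(nα)`. -/
noncomputable def Eqa (N q a : ℕ) (α : ℝ) : ℂ :=
  ∑ n ∈ progSet N q a, Complex.exp (2 * Real.pi * Complex.I * (n : ℂ) * (α : ℂ))

/-- The moment `V_k(Q;q,a)` of the count of reduced residues mod `Q`
in the progression `a (mod q)`. -/
noncomputable def Vk (N q a Q k : ℕ) : ℝ :=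
  (1 / (Q : ℝ)) * ∑ m ∈ Finset.range Q,
    (∑ n ∈ progSet N q a,
      (((Q : ℝ) / Q.totient) * (if Nat.gcd (n + m) Q = 1 then 1 else 0) - 1)) ^ k

noncomputable def eC (x : ℝ) : ℂ := Complex.exp (2 * Real.pi * Complex.I * x)

lemma eC_add (x y : ℝ) : eC (x + y) = eC x * eC y := by
  rw [eC, eC, eC, ← Complex.exp_add]; push_cast; ring_nf

lemma eC_nat_mul (m : ℕ) (x : ℝ) : eC (m * x) = eC x ^ m := by
  rw [eC, eC, ← Complex.exp_nat_mul]; push_cast; ring_nf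

lemma eC_nat (c : ℕ) : eC c = 1 := by
  rw [eC]
  have := Complex.exp_int_mul_two_pi_mul_I (c : ℤ)
  rw [← this]; congr 1; push_cast; ring

lemma eC_zero : eC 0 = 1 := by simpa using eC_nat 0

lemma sum_eC (Q : ℕ) (hQ : 0 < Q) (t : ℕ) :
    ∑ m ∈ Finset.range Q, eC (m * ((t : ℝ) / Q)) = if Q ∣ t then (Q : ℂ) else 0 := by
  have hsum : ∑ m ∈ Finset.range Q, eC (m * ((t : ℝ) / Q))
      = ∑ m ∈ Finset.range Q, (eC ((t : ℝ) / Q)) ^ m := by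
    refine Finset.sum_congr rfl fun m _ => ?_
    exact eC_nat_mul m _
  rw [hsum]
  by_cases h : Q ∣ t
  · obtain ⟨c, rfl⟩ := h
    have hQ' : (Q : ℝ) ≠ 0 := Nat.cast_ne_zero.mpr hQ.ne'
    have : ((Q * c : ℕ) : ℝ) / Q = (c : ℕ) := by push_cast; exact mul_div_cancel_left₀ _ hQ'
    rw [if_pos ⟨c, rfl⟩, this, eC_nat]
    simp
  · rw [if_neg h]
    have hpow : (eC ((t : ℝ) / Q)) ^ Q = 1 := by
      rw [← eC_nat_mul]
      have hQ' : (Q : ℝ) ≠ 0 := Nat.cast_ne_zero.mpr hQ.ne'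
      have : (Q : ℝ) * ((t : ℝ) / Q) = (t : ℝ) := by field_simp
      rw [this, eC_nat]
    have hne : eC ((t : ℝ) / Q) ≠ 1 := by
      intro he
      rw [eC, Complex.exp_eq_one_iff] at he
      obtain ⟨n, hn⟩ := he
      have h2 : (2 * (Real.pi : ℂ) * Complex.I) ≠ 0 := by
        simp [Real.pi_ne_zero, Complex.I_ne_zero]
      have : ((t : ℝ) / Q : ℂ) = (n : ℂ) := by
        field_simp at hn ⊢
        have := hn
        ring_nf at this ⊢
        push_cast at this
        exact mul_left_cancel₀ h2 (by linear_combination (2 * (Real.pi : ℂ) * Complex.I) * this)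
      have hr : (t : ℝ) / Q = (n : ℝ) := by
        exact_mod_cast this
      have ht : (t : ℝ) = (n : ℝ) * Q := by
        have hQ' : (Q : ℝ) ≠ 0 := Nat.cast_ne_zero.mpr hQ.ne'
        field_simp at hr; linarith [hr]
      have htz : (t : ℤ) = n * Q := by exact_mod_cast ht
      exact h (Int.ofNat_dvd.mp ⟨n, by rw [htz]; ring⟩)
    rw [geom_sum_eq hne, hpow]
    simp

open ArithmeticFunction in
lemma sum_moebius_divisors (n : ℕ) :
    ∑ d ∈ n.divisors, (moebius d : ℤ) = if n = 1 then 1 else 0 := by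
  calc ∑ d ∈ n.divisors, (moebius d : ℤ) = (moebius * ↑zeta : ArithmeticFunction ℤ) n :=
        (coe_mul_zeta_apply).symm
    _ = (1 : ArithmeticFunction ℤ) n := by rw [moebius_mul_coe_zeta]
    _ = if n = 1 then 1 else 0 := one_apply

open ArithmeticFunction in
lemma sum_moebius_div (n : ℕ) (hn : n ≠ 0) :
    ∑ d ∈ n.divisors, (moebius d : ℚ) / d = (n.totient : ℚ) / n := by
  have hbase : ∀ m : ℕ, m > 0 → ∑ i ∈ m.divisors, ((Nat.totient i : ℚ)) = (m : ℚ) := by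
    intro m hm
    exact_mod_cast congrArg (Nat.cast : ℕ → ℚ) (Nat.sum_totient m)
  have key := (ArithmeticFunction.sum_eq_iff_sum_mul_moebius_eq
    (f := fun i => (Nat.totient i : ℚ)) (g := fun m => (m : ℚ))).mp hbase n (Nat.pos_of_ne_zero hn)
  rw [Nat.sum_divisorsAntidiagonal (f := fun d e => (moebius d : ℚ) * e)] at key
  have hQ : (n : ℚ) ≠ 0 := Nat.cast_ne_zero.mpr hn
  have : ∑ d ∈ n.divisors, (moebius d : ℚ) / d
      = (∑ d ∈ n.divisors, (moebius d : ℚ) * ((n / d : ℕ) : ℚ)) / n := by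
    rw [Finset.sum_div]
    refine Finset.sum_congr rfl fun d hd => ?_
    obtain ⟨hdvd, -⟩ := Nat.mem_divisors.mp hd
    have hd0 : (d : ℚ) ≠ 0 := Nat.cast_ne_zero.mpr fun h => hn (by simpa [h] using hdvd)
    rw [Nat.cast_div hdvd hd0]
    field_simp
  rw [this, key]

open ArithmeticFunction in
lemma sum_moebius_div_eq_prod (n : ℕ) (hn : n ≠ 0) :
    ∑ d ∈ n.divisors, (moebius d : ℚ) / d = ∏ p ∈ n.primeFactors, (1 - (p : ℚ)⁻¹) := by
  rw [sum_moebius_div n hn, Nat.totient_eq_mul_prod_factors]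
  have hQ : (n : ℚ) ≠ 0 := Nat.cast_ne_zero.mpr hn
  field_simp

open ArithmeticFunction in
lemma sum_S (Q r : ℕ) (hQ : Q ≠ 0) (hr : r ∣ Q) :
    ∑ d ∈ Q.divisors.filter (fun d => r ∣ d), (moebius d : ℚ) / d
      = (Q.totient : ℚ) / Q * ((moebius r : ℚ) / r.totient) := by
  have hr0 : r ≠ 0 := fun h => hQ (by simpa [h] using hr)
  by_cases hsf : Squarefree r
  case neg =>
    rw [moebius_eq_zero_of_not_squarefree hsf]
    rw [Finset.sum_eq_zero]
    · simp
    intro d hd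
    obtain ⟨hdQ, hrd⟩ := Finset.mem_filter.mp hd
    have : ¬ Squarefree d := fun h => hsf (h.squarefree_of_dvd hrd)
    rw [moebius_eq_zero_of_not_squarefree this]
    simp
  case pos =>
  set M := Q / r with hMdef
  have hrpos : 0 < r := Nat.pos_of_ne_zero hr0
  have hM0 : M ≠ 0 := by
    have : 0 < Q / r := Nat.div_pos (Nat.le_of_dvd (Nat.pos_of_ne_zero hQ) hr) hrpos
    omega
  have step1 : ∑ d ∈ Q.divisors.filter (fun d => r ∣ d), (moebius d : ℚ) / d
      = ∑ e ∈ M.divisors, (moebius (r * e) : ℚ) / ((r * e : ℕ) : ℚ) := by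
    refine Finset.sum_nbij' (fun d => d / r) (fun e => r * e) ?_ ?_ ?_ ?_ ?_
    · intro d hd
      obtain ⟨hdQ, hrd⟩ := Finset.mem_filter.mp hd
      obtain ⟨hdvd, -⟩ := Nat.mem_divisors.mp hdQ
      refine Nat.mem_divisors.mpr ⟨(Nat.dvd_div_iff_mul_dvd hr).mpr ?_, hM0⟩
      rwa [Nat.mul_div_cancel' hrd]
    · intro e he
      obtain ⟨hdvd, -⟩ := Nat.mem_divisors.mp he
      refine Finset.mem_filter.mpr ⟨Nat.mem_divisors.mpr ⟨(Nat.dvd_div_iff_mul_dvd hr).mp hdvd, hQ⟩,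
        Dvd.intro e rfl⟩
    · intro d hd
      obtain ⟨-, hrd⟩ := Finset.mem_filter.mp hd
      exact Nat.mul_div_cancel' hrd
    · intro e he
      exact Nat.mul_div_cancel_left e hrpos
    · intro d hd
      obtain ⟨-, hrd⟩ := Finset.mem_filter.mp hd
      rw [Nat.mul_div_cancel' hrd]
  have step2 : ∀ e ∈ M.divisors, (moebius (r * e) : ℚ) / ((r * e : ℕ) : ℚ)
      = (moebius r : ℚ) / r * (if r.Coprime e then (moebius e : ℚ) / e else 0) := by
    intro e he
    have he0 : e ≠ 0 := fun h => hM0 (by simpa [h] using (Nat.mem_divisors.mp he).1)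
    by_cases hc : r.Coprime e
    · rw [if_pos hc, isMultiplicative_moebius.map_mul_of_coprime hc]
      have her : (e : ℚ) ≠ 0 := Nat.cast_ne_zero.mpr he0
      have hrr : (r : ℚ) ≠ 0 := Nat.cast_ne_zero.mpr hr0
      push_cast
      field_simp
    · rw [if_neg hc]
      have hnsq : ¬ Squarefree (r * e) := by
        intro hsq
        obtain ⟨p, hp, hpr, hpe⟩ := Nat.Prime.not_coprime_iff_dvd.mp hc
        exact hp.one_lt.ne' (Nat.isUnit_iff.mp (hsq p (mul_dvd_mul hpr hpe)))
      rw [moebius_eq_zero_of_not_squarefree hnsq]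
      simp
  rw [step1, Finset.sum_congr rfl step2, ← Finset.mul_sum]
  -- step 3
  set M₀ := ∏ p ∈ M.primeFactors \ r.primeFactors, p with hM₀def
  have hM₀primes : ∀ p ∈ M.primeFactors \ r.primeFactors, Nat.Prime p := fun p hp =>
    Nat.prime_of_mem_primeFactors (Finset.mem_sdiff.mp hp).1
  have hM₀0 : M₀ ≠ 0 := by
    rw [hM₀def]
    exact Finset.prod_ne_zero_iff.mpr fun p hp => (hM₀primes p hp).pos.ne'
  have hM₀F : M₀.primeFactors = M.primeFactors \ r.primeFactors :=
    Nat.primeFactors_prod hM₀primes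
  have hM₀dvd : M₀ ∣ M :=
    dvd_trans (Finset.prod_dvd_prod_of_subset _ _ _ Finset.sdiff_subset)
      (Nat.prod_primeFactors_dvd M)
  have step3 : ∑ e ∈ M.divisors, (if r.Coprime e then (moebius e : ℚ) / e else 0)
      = ∑ e ∈ M₀.divisors, (moebius e : ℚ) / e := by
    rw [← Finset.sum_filter]
    refine (Finset.sum_subset ?_ ?_).symm
    · intro e he
      obtain ⟨hdvd, -⟩ := Nat.mem_divisors.mp he
      have he0 : e ≠ 0 := fun h => hM₀0 (by simpa [h] using hdvd)
      refine Finset.mem_filter.mpr ⟨Nat.mem_divisors.mpr ⟨hdvd.trans hM₀dvd, hM0⟩, ?_⟩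
      refine (Nat.disjoint_primeFactors hr0 he0).mp ?_
      have hsub : e.primeFactors ⊆ M.primeFactors \ r.primeFactors := by
        rw [← hM₀F]; exact Nat.primeFactors_mono hdvd hM₀0
      exact Finset.disjoint_sdiff.mono_right hsub
    · intro e he hne
      obtain ⟨heM, hce⟩ := Finset.mem_filter.mp he
      obtain ⟨hdvd, -⟩ := Nat.mem_divisors.mp heM
      have he0 : e ≠ 0 := fun h => hM0 (by simpa [h] using hdvd)
      by_cases hsq : Squarefree e
      · exfalso
        apply hne
        refine Nat.mem_divisors.mpr ⟨?_, hM₀0⟩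
        have hsub : e.primeFactors ⊆ M.primeFactors \ r.primeFactors := by
          intro p hp
          obtain ⟨hpp, hpe, -⟩ := Nat.mem_primeFactors.mp hp
          refine Finset.mem_sdiff.mpr ⟨Nat.mem_primeFactors.mpr ⟨hpp, hpe.trans hdvd, hM0⟩, ?_⟩
          intro hpr
          obtain ⟨-, hpr', -⟩ := Nat.mem_primeFactors.mp hpr
          have : p ∣ 1 := hce ▸ Nat.dvd_gcd hpr' hpe
          exact hpp.one_lt.ne' (Nat.eq_one_of_dvd_one this)
        calc e = ∏ p ∈ e.primeFactors, p := (Nat.prod_primeFactors_of_squarefree hsq).symm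
          _ ∣ M₀ := Finset.prod_dvd_prod_of_subset _ _ _ hsub
      · rw [moebius_eq_zero_of_not_squarefree hsq]
        simp
  rw [step3, sum_moebius_div_eq_prod M₀ hM₀0, hM₀F]
  -- step 5 : replace M by Q in the index set
  have h5 : M.primeFactors \ r.primeFactors = Q.primeFactors \ r.primeFactors := by
    ext p
    constructor
    · intro hp
      obtain ⟨h1, h2⟩ := Finset.mem_sdiff.mp hp
      obtain ⟨hpp, hpM, -⟩ := Nat.mem_primeFactors.mp h1
      exact Finset.mem_sdiff.mpr
        ⟨Nat.mem_primeFactors.mpr ⟨hpp, hpM.trans (Nat.div_dvd_of_dvd hr), hQ⟩, h2⟩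
    · intro hp
      obtain ⟨h1, h2⟩ := Finset.mem_sdiff.mp hp
      obtain ⟨hpp, hpQ, -⟩ := Nat.mem_primeFactors.mp h1
      refine Finset.mem_sdiff.mpr ⟨Nat.mem_primeFactors.mpr ⟨hpp, ?_, hM0⟩, h2⟩
      have hQeq : r * M = Q := Nat.mul_div_cancel' hr
      rcases (Nat.Prime.dvd_mul hpp).mp (hQeq ▸ hpQ) with h | h
      · exact absurd (Nat.mem_primeFactors.mpr ⟨hpp, h, hr0⟩) h2
      · exact h
  rw [h5]
  -- step 6 : algebra
  have hrF : r.primeFactors ⊆ Q.primeFactors := Nat.primeFactors_mono hr hQ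
  have hQ' : (Q : ℚ) ≠ 0 := Nat.cast_ne_zero.mpr hQ
  have hr' : (r : ℚ) ≠ 0 := Nat.cast_ne_zero.mpr hr0
  have hfac : ∀ p : ℕ, Nat.Prime p → (1 - (p : ℚ)⁻¹) ≠ 0 := by
    intro p hp
    intro h
    rw [sub_eq_zero] at h
    have hp' : (p : ℚ) = 1 := by
      have := congrArg (·⁻¹) h
      simpa using this.symm
    exact hp.one_lt.ne' (by exact_mod_cast hp')
  have hB : (∏ p ∈ r.primeFactors, (1 - (p : ℚ)⁻¹)) ≠ 0 :=
    Finset.prod_ne_zero_iff.mpr fun p hp => hfac p (Nat.prime_of_mem_primeFactors hp)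
  rw [Nat.totient_eq_mul_prod_factors Q, Nat.totient_eq_mul_prod_factors r,
    ← Finset.prod_sdiff hrF]
  set A := ∏ p ∈ Q.primeFactors \ r.primeFactors, (1 - (p : ℚ)⁻¹) with hAdef
  set B := ∏ p ∈ r.primeFactors, (1 - (p : ℚ)⁻¹) with hBdef
  field_simp

open ArithmeticFunction in
lemma indicator_eq (Q x : ℕ) (hQ : Q ≠ 0) :
    (if Nat.gcd x Q = 1 then (1 : ℂ) else 0)
      = ∑ d ∈ Q.divisors, (moebius d : ℂ) * (if d ∣ x then 1 else 0) := by
  have h1 : ∑ d ∈ Q.divisors, (moebius d : ℂ) * (if d ∣ x then 1 else 0)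
      = ∑ d ∈ Q.divisors.filter (fun d => d ∣ x), (moebius d : ℂ) := by
    rw [Finset.sum_filter]
    refine Finset.sum_congr rfl fun d _ => ?_
    by_cases h : d ∣ x <;> simp [h]
  have h2 : Q.divisors.filter (fun d => d ∣ x) = (Nat.gcd x Q).divisors := by
    ext d
    have hg : Nat.gcd x Q ≠ 0 := Nat.gcd_ne_zero_right hQ
    simp only [Finset.mem_filter, Nat.mem_divisors, hQ, hg, ne_eq, not_false_eq_true, and_true]
    rw [Nat.dvd_gcd_iff]
    tauto
  rw [h1, h2]
  have := sum_moebius_divisors (Nat.gcd x Q)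
  have hcast : ∑ d ∈ (Nat.gcd x Q).divisors, (moebius d : ℂ)
      = ((∑ d ∈ (Nat.gcd x Q).divisors, (moebius d : ℤ) : ℤ) : ℂ) := by push_cast; rfl
  rw [hcast, this]
  by_cases h : Nat.gcd x Q = 1 <;> simp [h]

lemma ite_dvd_eq_sum (d x : ℕ) (hd : d ≠ 0) :
    (if d ∣ x then (1 : ℂ) else 0)
      = (1 / (d : ℂ)) * ∑ b ∈ Finset.range d, eC (x * ((b : ℝ) / d)) := by
  have h : ∑ b ∈ Finset.range d, eC (x * ((b : ℝ) / d))
      = ∑ b ∈ Finset.range d, eC (b * ((x : ℝ) / d)) := by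
    refine Finset.sum_congr rfl fun b _ => ?_
    congr 1
    ring
  rw [h, sum_eC d (Nat.pos_of_ne_zero hd) x]
  have hd' : (d : ℂ) ≠ 0 := Nat.cast_ne_zero.mpr hd
  by_cases hdvd : d ∣ x <;> simp [hdvd, hd']

open ArithmeticFunction in
lemma regroup (Q x : ℕ) (hQ : Q ≠ 0) :
    ∑ d ∈ Q.divisors, ((moebius d : ℂ) / d) * ∑ b ∈ Finset.range d, eC (x * ((b : ℝ) / d))
      = ∑ r ∈ Q.divisors,
          (∑ d ∈ Q.divisors.filter (fun d => r ∣ d), (moebius d : ℂ) / d) *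
            ∑ b ∈ (Finset.range r).filter (fun b => Nat.gcd b r = 1),
              eC (x * ((b : ℝ) / r)) := by
  have hdne : ∀ d ∈ Q.divisors, d ≠ 0 := fun d hd h =>
    (Nat.mem_divisors.mp hd).2 (by simpa [h] using (Nat.mem_divisors.mp hd).1)
  calc ∑ d ∈ Q.divisors, ((moebius d : ℂ) / d) * ∑ b ∈ Finset.range d, eC (x * ((b : ℝ) / d))
      = ∑ p ∈ Q.divisors.sigma (fun d => Finset.range d),
          ((moebius p.1 : ℂ) / p.1) * eC (x * ((p.2 : ℝ) / p.1)) := by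
        rw [Finset.sum_sigma]
        exact Finset.sum_congr rfl fun d _ => Finset.mul_sum _ _ _
    _ = ∑ p ∈ Q.divisors.sigma (fun r =>
          (Q.divisors.filter (fun d => r ∣ d)) ×ˢ
            ((Finset.range r).filter (fun b => Nat.gcd b r = 1))),
          ((moebius p.2.1 : ℂ) / p.2.1) * eC (x * ((p.2.2 : ℝ) / p.1)) := by
        refine Finset.sum_nbij'
          (fun p => ⟨p.1 / Nat.gcd p.2 p.1, (p.1, p.2 / Nat.gcd p.2 p.1)⟩)
          (fun p => ⟨p.2.1, p.2.2 * (p.2.1 / p.1)⟩) ?_ ?_ ?_ ?_ ?_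
        · rintro ⟨d, b⟩ hp
          simp only [Finset.mem_sigma, Finset.mem_range] at hp
          obtain ⟨hd, hb⟩ := hp
          have hd0 : d ≠ 0 := hdne d hd
          have hblt : b < d := hb
          have hg : 0 < Nat.gcd b d := Nat.gcd_pos_of_pos_right b (Nat.pos_of_ne_zero hd0)
          refine Finset.mem_sigma.mpr ⟨?_, Finset.mem_mk.mpr ?_⟩
          · exact Nat.mem_divisors.mpr
              ⟨(Nat.div_dvd_of_dvd (Nat.gcd_dvd_right b d)).trans (Nat.mem_divisors.mp hd).1, hQ⟩
          · refine Finset.mem_product.mpr ⟨Finset.mem_filter.mpr ⟨hd, ?_⟩, ?_⟩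
            · exact Nat.div_dvd_of_dvd (Nat.gcd_dvd_right b d)
            · refine Finset.mem_filter.mpr ⟨Finset.mem_range.mpr ?_, ?_⟩
              · exact Nat.div_lt_div_of_lt_of_dvd (Nat.gcd_dvd_right b d) hblt
              · exact Nat.coprime_div_gcd_div_gcd hg
        · rintro ⟨r, d, b'⟩ hp
          obtain ⟨hr, hdb⟩ := Finset.mem_sigma.mp hp
          obtain ⟨hdf, hbf⟩ := Finset.mem_product.mp hdb
          obtain ⟨hd, hrd⟩ := Finset.mem_filter.mp hdf
          obtain ⟨hbr, hbcop⟩ := Finset.mem_filter.mp hbf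
          have hd0 : d ≠ 0 := hdne d hd
          have hr0 : r ≠ 0 := hdne r hr
          have hdr : 0 < d / r :=
            Nat.div_pos (Nat.le_of_dvd (Nat.pos_of_ne_zero hd0) hrd) (Nat.pos_of_ne_zero hr0)
          refine Finset.mem_sigma.mpr ⟨hd, Finset.mem_range.mpr ?_⟩
          calc b' * (d / r) < r * (d / r) :=
                Nat.mul_lt_mul_of_lt_of_le (Finset.mem_range.mp hbr) le_rfl hdr
            _ = d := Nat.mul_div_cancel' hrd
        · rintro ⟨d, b⟩ hp
          simp only [Finset.mem_sigma, Finset.mem_range] at hp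
          obtain ⟨hd, hblt⟩ := hp
          have hd0 : d ≠ 0 := hdne d hd
          have hgd : Nat.gcd b d ∣ d := Nat.gcd_dvd_right b d
          have hgb : Nat.gcd b d ∣ b := Nat.gcd_dvd_left b d
          dsimp only
          rw [Nat.div_div_self hgd hd0, Nat.div_mul_cancel hgb]
        · rintro ⟨r, d, b'⟩ hp
          simp only [Finset.mem_sigma, Finset.mem_product, Finset.mem_filter,
            Finset.mem_range] at hp
          obtain ⟨hr, ⟨⟨hd, hrd⟩, hbr, hbcop⟩⟩ := hp
          have hd0 : d ≠ 0 := hdne d hd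
          have hr0 : r ≠ 0 := hdne r hr
          have hdr : 0 < d / r :=
            Nat.div_pos (Nat.le_of_dvd (Nat.pos_of_ne_zero hd0) hrd) (Nat.pos_of_ne_zero hr0)
          have hgcd : Nat.gcd (b' * (d / r)) d = d / r := by
            have h1 : r * (d / r) = d := Nat.mul_div_cancel' hrd
            calc Nat.gcd (b' * (d / r)) d
                = Nat.gcd (b' * (d / r)) (r * (d / r)) := by rw [h1]
              _ = Nat.gcd b' r * (d / r) := Nat.gcd_mul_right _ _ _
              _ = d / r := by rw [hbcop, one_mul]
          dsimp only
          rw [hgcd, Nat.div_div_self hrd hd0, Nat.mul_div_cancel _ hdr]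
        · rintro ⟨d, b⟩ hp
          simp only [Finset.mem_sigma, Finset.mem_range] at hp
          obtain ⟨hd, hb⟩ := hp
          have hd0 : d ≠ 0 := hdne d hd
          have hg0 : Nat.gcd b d ≠ 0 :=
            (Nat.gcd_pos_of_pos_right b (Nat.pos_of_ne_zero hd0)).ne'
          have hgd : Nat.gcd b d ∣ d := Nat.gcd_dvd_right b d
          have hgb : Nat.gcd b d ∣ b := Nat.gcd_dvd_left b d
          show ((moebius d : ℂ) / d) * eC (x * ((b : ℝ) / d))
            = ((moebius d : ℂ) / d) *
              eC (x * (((b / Nat.gcd b d : ℕ) : ℝ) / ((d / Nat.gcd b d : ℕ) : ℝ)))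
          congr 2
          have hg' : (Nat.gcd b d : ℝ) ≠ 0 := Nat.cast_ne_zero.mpr hg0
          have hd' : (d : ℝ) ≠ 0 := Nat.cast_ne_zero.mpr hd0
          have hdg0 : d / Nat.gcd b d ≠ 0 := by
            have := Nat.div_pos (Nat.le_of_dvd (Nat.pos_of_ne_zero hd0) hgd)
              (Nat.pos_of_ne_zero hg0)
            omega
          have hdg' : ((d / Nat.gcd b d : ℕ) : ℝ) ≠ 0 := Nat.cast_ne_zero.mpr hdg0
          rw [Nat.cast_div hgb hg', Nat.cast_div hgd hg', div_div_div_cancel_right₀ hg']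
    _ = ∑ r ∈ Q.divisors,
          (∑ d ∈ Q.divisors.filter (fun d => r ∣ d), (moebius d : ℂ) / d) *
            ∑ b ∈ (Finset.range r).filter (fun b => Nat.gcd b r = 1),
              eC (x * ((b : ℝ) / r)) := by
        rw [Finset.sum_sigma]
        refine Finset.sum_congr rfl fun r hr => ?_
        rw [Finset.sum_mul_sum, ← Finset.sum_product']

open ArithmeticFunction in
lemma pointwise (Q x : ℕ) (hQ : Q ≠ 0) :
    ((Q : ℂ) / (Q.totient : ℂ)) * (if Nat.gcd x Q = 1 then 1 else 0)
      = ∑ r ∈ Q.divisors, ((moebius r : ℂ) / (r.totient : ℂ)) *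
          ∑ b ∈ (Finset.range r).filter (fun b => Nat.gcd b r = 1),
            eC (x * ((b : ℝ) / r)) := by
  have hdne : ∀ d ∈ Q.divisors, d ≠ 0 := fun d hd h =>
    (Nat.mem_divisors.mp hd).2 (by simpa [h] using (Nat.mem_divisors.mp hd).1)
  have hφQ : (Q.totient : ℂ) ≠ 0 :=
    Nat.cast_ne_zero.mpr (Nat.totient_pos.mpr (Nat.pos_of_ne_zero hQ)).ne'
  have hQ' : (Q : ℂ) ≠ 0 := Nat.cast_ne_zero.mpr hQ
  rw [indicator_eq Q x hQ]
  have h1 : ∑ d ∈ Q.divisors, (moebius d : ℂ) * (if d ∣ x then 1 else 0)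
      = ∑ d ∈ Q.divisors, ((moebius d : ℂ) / d) * ∑ b ∈ Finset.range d,
          eC (x * ((b : ℝ) / d)) := by
    refine Finset.sum_congr rfl fun d hd => ?_
    rw [ite_dvd_eq_sum d x (hdne d hd)]
    ring
  rw [h1, regroup Q x hQ, Finset.mul_sum]
  refine Finset.sum_congr rfl fun r hr => ?_
  have hr0 : r ≠ 0 := hdne r hr
  have hScast : ∑ d ∈ Q.divisors.filter (fun d => r ∣ d), (moebius d : ℂ) / d
      = (((Q.totient : ℚ) / Q * ((moebius r : ℚ) / r.totient) : ℚ) : ℂ) := by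
    rw [← sum_S Q r hQ (Nat.mem_divisors.mp hr).1]
    push_cast
    rfl
  rw [← mul_assoc, hScast]
  push_cast
  have hφr : (r.totient : ℂ) ≠ 0 :=
    Nat.cast_ne_zero.mpr (Nat.totient_pos.mpr (Nat.pos_of_ne_zero hr0)).ne'
  field_simp

open ArithmeticFunction in
lemma pointwise' (Q x : ℕ) (hQ : Q ≠ 0) :
    ((Q : ℂ) / (Q.totient : ℂ)) * (if Nat.gcd x Q = 1 then 1 else 0) - 1
      = ∑ r ∈ Q.divisors.filter (fun d => 1 < d),
          ((moebius r : ℂ) / (r.totient : ℂ)) *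
            ∑ b ∈ (Finset.range r).filter (fun b => Nat.gcd b r = 1),
              eC (x * ((b : ℝ) / r)) := by
  rw [pointwise Q x hQ]
  have h1 : (1 : ℕ) ∈ Q.divisors := Nat.one_mem_divisors.mpr hQ
  rw [← Finset.add_sum_erase _ _ h1]
  have herase : Q.divisors.erase 1 = Q.divisors.filter (fun d => 1 < d) := by
    ext d
    simp only [Finset.mem_erase, Finset.mem_filter, Nat.mem_divisors]
    constructor
    · rintro ⟨hne, hdvd, hQ0⟩
      have : d ≠ 0 := fun h => hQ0 (by simpa [h] using hdvd)
      exact ⟨⟨hdvd, hQ0⟩, by omega⟩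
    · rintro ⟨⟨hdvd, hQ0⟩, hlt⟩
      exact ⟨by omega, hdvd, hQ0⟩
  have hterm : ((moebius 1 : ℂ) / ((1 : ℕ).totient : ℂ)) *
      ∑ b ∈ (Finset.range 1).filter (fun b => Nat.gcd b 1 = 1),
        eC (x * ((b : ℝ) / (1 : ℕ))) = 1 := by
    have : (Finset.range 1).filter (fun b => Nat.gcd b 1 = 1) = {0} := by decide
    rw [this]
    simp [eC_zero]
  rw [herase, hterm]
  ring

lemma eC_sum {ι : Type*} (s : Finset ι) (f : ι → ℝ) :
    eC (∑ i ∈ s, f i) = ∏ i ∈ s, eC (f i) := by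
  classical
  induction s using Finset.induction_on with
  | empty => simp [eC_zero]
  | insert _ _ h ih => rw [Finset.sum_insert h, Finset.prod_insert h, eC_add, ih]

lemma Eqa_eq (N q a : ℕ) (α : ℝ) : Eqa N q a α = ∑ n ∈ progSet N q a, eC (n * α) := by
  refine Finset.sum_congr rfl fun n _ => ?_
  rw [eC]
  push_cast
  ring_nf

open ArithmeticFunction

/-- Fourier expansion of the moments of reduced residues in a progression
to a large modulus (Lemma 2.1). -/
theorem Vk_eq_sum_over_tuples (k Q q N a : ℕ) (hQ : 1 ≤ Q) (hq : 2 ≤ q)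
    (hqQ : Nat.gcd q Q = 1) (hN : 2 * q ≤ N) (ha : Nat.gcd a q = 1) :
    (Vk N q a Q k : ℂ) =
      ∑ r ∈ Fintype.piFinset (fun _ : Fin k => Q.divisors.filter (fun d => 1 < d)),
        (∏ i, ((ArithmeticFunction.moebius (r i) : ℂ) / ((r i).totient : ℂ))) *
          ∑ b ∈ (Fintype.piFinset (fun i : Fin k =>
              (Finset.range (r i)).filter (fun b => Nat.gcd b (r i) = 1))).filter
              (fun b => (∑ i, (b i : ℚ) / (r i : ℚ)).den = 1),
            ∏ i, Eqa N q a ((b i : ℝ) / (r i : ℝ)) := by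
   classical
  have hQ0 : Q ≠ 0 := by omega
  have hQ' : (Q : ℂ) ≠ 0 := Nat.cast_ne_zero.mpr hQ0
  set A := progSet N q a with hA
  set D := Q.divisors.filter (fun d => 1 < d) with hD
  set B : ℕ → Finset ℕ := fun r => (Finset.range r).filter (fun b => Nat.gcd b r = 1) with hB
  have hDdvd : ∀ r ∈ D, r ∣ Q ∧ r ≠ 0 := by
    intro r hr
    obtain ⟨hr1, hr2⟩ := Finset.mem_filter.mp hr
    exact ⟨(Nat.mem_divisors.mp hr1).1, by omega⟩
  -- Step 0 : cast
  have cast0 : (Vk N q a Q k : ℂ) = (1 / (Q : ℂ)) * ∑ m ∈ Finset.range Q,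
      (∑ n ∈ A, ((Q : ℂ) / (Q.totient : ℂ) *
        (if Nat.gcd (n + m) Q = 1 then 1 else 0) - 1)) ^ k := by
    rw [Vk]
    push_cast [apply_ite ((↑·) : ℝ → ℂ)]
    rfl
  rw [cast0]
  -- Step 1 : pointwise expansion
  have key1 : ∀ m : ℕ, (∑ n ∈ A, ((Q : ℂ) / (Q.totient : ℂ) *
        (if Nat.gcd (n + m) Q = 1 then 1 else 0) - 1))
      = ∑ r ∈ D, ((moebius r : ℂ) / (r.totient : ℂ)) *
          ∑ b ∈ B r, eC (m * ((b : ℝ) / r)) * Eqa N q a ((b : ℝ) / r) := by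
    intro m
    have h1 : ∀ n ∈ A, ((Q : ℂ) / (Q.totient : ℂ) *
          (if Nat.gcd (n + m) Q = 1 then 1 else 0) - 1)
        = ∑ r ∈ D, ((moebius r : ℂ) / (r.totient : ℂ)) *
            ∑ b ∈ B r, eC ((n + m : ℕ) * ((b : ℝ) / r)) := by
      intro n _
      exact pointwise' Q (n + m) hQ0
    rw [Finset.sum_congr rfl h1, Finset.sum_comm]
    refine Finset.sum_congr rfl fun r hr => ?_
    rw [← Finset.mul_sum]
    congr 1
    rw [Finset.sum_comm]
    refine Finset.sum_congr rfl fun b hb => ?_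
    rw [Eqa_eq, Finset.mul_sum]
    refine Finset.sum_congr rfl fun n hn => ?_
    rw [← eC_add]
    congr 1
    push_cast
    ring
  rw [Finset.sum_congr rfl (fun m _ => congrArg (· ^ k) (key1 m))]
  -- Step 2 : expand the k-th power
  have key2 : ∀ m : ℕ, (∑ r ∈ D, ((moebius r : ℂ) / (r.totient : ℂ)) *
        ∑ b ∈ B r, eC (m * ((b : ℝ) / r)) * Eqa N q a ((b : ℝ) / r)) ^ k
      = ∑ R ∈ Fintype.piFinset (fun _ : Fin k => D),
          (∏ i, ((moebius (R i) : ℂ) / ((R i).totient : ℂ))) *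
            ∑ b ∈ Fintype.piFinset (fun i => B (R i)),
              (∏ i, eC (m * ((b i : ℝ) / (R i : ℝ)))) *
                ∏ i, Eqa N q a ((b i : ℝ) / (R i : ℝ)) := by
    intro m
    calc (∑ r ∈ D, ((moebius r : ℂ) / (r.totient : ℂ)) *
            ∑ b ∈ B r, eC (m * ((b : ℝ) / r)) * Eqa N q a ((b : ℝ) / r)) ^ k
        = ∏ _i : Fin k, ∑ r ∈ D, ((moebius r : ℂ) / (r.totient : ℂ)) *
            ∑ b ∈ B r, eC (m * ((b : ℝ) / r)) * Eqa N q a ((b : ℝ) / r) := by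
          rw [Finset.prod_const, Finset.card_univ, Fintype.card_fin]
      _ = ∑ R ∈ Fintype.piFinset (fun _ : Fin k => D),
            ∏ i, (((moebius (R i) : ℂ) / ((R i).totient : ℂ)) *
              ∑ b ∈ B (R i), eC (m * ((b : ℝ) / (R i))) * Eqa N q a ((b : ℝ) / (R i))) :=
          Finset.prod_univ_sum _ _
      _ = _ := by
          refine Finset.sum_congr rfl fun R hR => ?_
          rw [Finset.prod_mul_distrib]
          congr 1
          rw [Finset.prod_univ_sum]
          refine Finset.sum_congr rfl fun b hb => ?_
          rw [Finset.prod_mul_distrib]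
  rw [Finset.sum_congr rfl (fun m _ => key2 m)]
  -- Step 3 : average over m
  rw [Finset.mul_sum]
  have push : ∀ m ∈ Finset.range Q, (1 / (Q : ℂ)) *
      (∑ R ∈ Fintype.piFinset (fun _ : Fin k => D),
        (∏ i, ((moebius (R i) : ℂ) / ((R i).totient : ℂ))) *
          ∑ b ∈ Fintype.piFinset (fun i => B (R i)),
            (∏ i, eC (m * ((b i : ℝ) / (R i : ℝ)))) *
              ∏ i, Eqa N q a ((b i : ℝ) / (R i : ℝ)))
      = ∑ R ∈ Fintype.piFinset (fun _ : Fin k => D), (1 / (Q : ℂ)) *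
          ((∏ i, ((moebius (R i) : ℂ) / ((R i).totient : ℂ))) *
            ∑ b ∈ Fintype.piFinset (fun i => B (R i)),
              (∏ i, eC (m * ((b i : ℝ) / (R i : ℝ)))) *
                ∏ i, Eqa N q a ((b i : ℝ) / (R i : ℝ))) := fun m _ => Finset.mul_sum _ _ _
  rw [Finset.sum_congr rfl push, Finset.sum_comm]
  refine Finset.sum_congr rfl fun R hR => ?_
  have hRi : ∀ i, R i ∣ Q ∧ R i ≠ 0 := fun i => hDdvd _ (Fintype.mem_piFinset.mp hR i)
  -- reorganize the m-sum
  calc ∑ m ∈ Finset.range Q, (1 / (Q : ℂ)) *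
          ((∏ i, ((moebius (R i) : ℂ) / ((R i).totient : ℂ))) *
            ∑ b ∈ Fintype.piFinset (fun i => B (R i)),
              (∏ i, eC (m * ((b i : ℝ) / (R i : ℝ)))) *
                ∏ i, Eqa N q a ((b i : ℝ) / (R i : ℝ)))
      = (∏ i, ((moebius (R i) : ℂ) / ((R i).totient : ℂ))) *
          ∑ b ∈ Fintype.piFinset (fun i => B (R i)),
            ((1 / (Q : ℂ)) * ∑ m ∈ Finset.range Q, ∏ i, eC (m * ((b i : ℝ) / (R i : ℝ)))) *
              ∏ i, Eqa N q a ((b i : ℝ) / (R i : ℝ)) := by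
        simp only [Finset.mul_sum]
        rw [Finset.sum_comm]
        refine Finset.sum_congr rfl fun b hb => ?_
        rw [Finset.sum_mul, Finset.mul_sum]
        refine Finset.sum_congr rfl fun m hm => ?_
        ring
    _ = (∏ i, ((moebius (R i) : ℂ) / ((R i).totient : ℂ))) *
          ∑ b ∈ (Fintype.piFinset (fun i => B (R i))).filter
              (fun b => (∑ i, (b i : ℚ) / (R i : ℚ)).den = 1),
            ∏ i, Eqa N q a ((b i : ℝ) / (R i : ℝ)) := by
        congr 1
        rw [Finset.sum_filter]
        refine Finset.sum_congr rfl fun b hb => ?_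
        -- evaluate the average of exponentials
        set t : ℕ := ∑ i, b i * (Q / R i) with ht
        have hcast : ∀ (K : Type) [inst : Field K] [inst2 : CharZero K], ∀ i : Fin k,
            ((b i * (Q / R i) : ℕ) : K) / (Q : K) = (b i : K) / (R i : K) := by
          intro K _ _ i
          have hdvd := (hRi i).1
          have hne : ((R i : K)) ≠ 0 := Nat.cast_ne_zero.mpr (hRi i).2
          have hQK : ((Q : K)) ≠ 0 := Nat.cast_ne_zero.mpr hQ0
          rw [Nat.cast_mul, Nat.cast_div hdvd hne]
          field_simp
        have havg : (1 / (Q : ℂ)) * ∑ m ∈ Finset.range Q,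
            ∏ i, eC (m * ((b i : ℝ) / (R i : ℝ))) = if Q ∣ t then 1 else 0 := by
          have hsum : ∀ m : ℕ, ∏ i, eC (m * ((b i : ℝ) / (R i : ℝ)))
              = eC (m * ((t : ℝ) / Q)) := by
            intro m
            rw [← eC_sum]
            congr 1
            rw [ht]
            push_cast
            rw [Finset.sum_div, Finset.mul_sum]
            refine Finset.sum_congr rfl fun i _ => ?_
            rw [show ((b i : ℝ) * (((Q : ℕ) / (R i : ℕ) : ℕ) : ℝ)) / (Q : ℝ)
                = ((b i * (Q / R i) : ℕ) : ℝ) / (Q : ℝ) by push_cast; ring, hcast ℝ i]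
          rw [Finset.sum_congr rfl fun m _ => hsum m, sum_eC Q (Nat.pos_of_ne_zero hQ0) t]
          by_cases h : Q ∣ t <;> simp [h, hQ']
        have hden : (∑ i, (b i : ℚ) / (R i : ℚ)).den = 1 ↔ Q ∣ t := by
          have hsumQ : (∑ i, (b i : ℚ) / (R i : ℚ)) = (t : ℚ) / Q := by
            rw [ht]
            push_cast
            rw [Finset.sum_div]
            refine Finset.sum_congr rfl fun i _ => ?_
            rw [show ((b i : ℚ) * (((Q : ℕ) / (R i : ℕ) : ℕ) : ℚ)) / (Q : ℚ)
                = ((b i * (Q / R i) : ℕ) : ℚ) / (Q : ℚ) by push_cast; ring, hcast ℚ i]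
          rw [hsumQ]
          constructor
          · intro h
            have hx := (Rat.den_eq_one_iff _).mp h
            set x := (t : ℚ) / Q with hxdef
            have hQQ : ((Q : ℚ)) ≠ 0 := Nat.cast_ne_zero.mpr hQ0
            have h2 : (t : ℚ) = (x.num : ℚ) * Q := by
              rw [hx, hxdef]
              field_simp
            have h3 : (t : ℤ) = x.num * Q := by exact_mod_cast h2
            have : (Q : ℤ) ∣ (t : ℤ) := Dvd.intro x.num (by rw [h3]; ring)
            exact_mod_cast this
          · rintro ⟨c, hc⟩
            have hQQ : ((Q : ℚ)) ≠ 0 := Nat.cast_ne_zero.mpr hQ0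
            rw [hc, show ((Q * c : ℕ) : ℚ) / Q = (c : ℚ) by push_cast; field_simp]
            exact Rat.den_natCast c
        rw [havg]
        rw [if_congr hden.symm rfl rfl]
        by_cases h : (∑ i, (b i : ℚ) / (R i : ℚ)).den = 1 <;> simp [h]
end

section
/- Let N ≥ 1, q ≥ 2 and r ≥ 1 be integers with gcd(q,r)=1, and let a be an integer coprime to q. Then Σ_{b mod r, gcd(b,r)=1} |E_{q,a}(b/r)|² = φ(r)·H + 2 Σ_{1≤m≤H} (H − m)·c_r(qm), where H := #{1 ≤ n ≤ N : n ≡ a (mod q)}. -/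
open Finset Filter

/-- The Ramanujan sum `c_r(n)`. -/
noncomputable def ramanujanC (r n : ℕ) : ℂ :=
  ∑ b ∈ (Finset.range r).filter (fun b => Nat.gcd b r = 1),
    Complex.exp (2 * Real.pi * Complex.I * (b : ℂ) * (n : ℂ) / (r : ℂ))

private lemma icc_sum_eq (f : ℤ → ℂ) (K : ℕ) :
    ∑ m ∈ Finset.Icc 1 K, f (m : ℤ) = ∑ j ∈ Finset.range K, f ((j : ℤ) + 1) := by
  rw [← Finset.Ico_add_one_right_eq_Icc, Finset.sum_Ico_eq_sum_range]
  refine Finset.sum_congr (by norm_num) fun j hj => ?_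
  congr 1
  push_cast
  ring

private lemma reflect_sum (g : ℤ → ℂ) (K : ℕ) :
    ∑ j ∈ Finset.range K, g ((K : ℤ) - (j : ℤ)) = ∑ m ∈ Finset.Icc 1 K, g (m : ℤ) := by
  rw [← Finset.sum_range_reflect, icc_sum_eq]
  refine Finset.sum_congr rfl fun j hj => ?_
  rw [Finset.mem_range] at hj
  congr 1
  omega

private lemma count_aux (g : ℤ → ℂ) (hg : ∀ d, g (-d) = g d) (K : ℕ) :
    ∑ j ∈ Finset.range K, ∑ j' ∈ Finset.range K, g ((j : ℤ) - (j' : ℤ)) =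
      (K : ℂ) * g 0 + 2 * ∑ m ∈ Finset.Icc 1 K, ((K : ℂ) - (m : ℂ)) * g (m : ℤ) := by
  induction K with
  | zero => simp
  | succ K ih =>
    have expand : ∑ j ∈ Finset.range (K+1), ∑ j' ∈ Finset.range (K+1), g ((j:ℤ) - (j':ℤ)) =
        (∑ j ∈ Finset.range K, ∑ j' ∈ Finset.range K, g ((j:ℤ) - (j':ℤ)))
        + (∑ j ∈ Finset.range K, g ((j:ℤ) - (K:ℤ)))
        + ((∑ j' ∈ Finset.range K, g ((K:ℤ) - (j':ℤ))) + g 0) := by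
      rw [Finset.sum_range_succ]
      rw [Finset.sum_range_succ (fun j' => g ((K:ℤ) - (j':ℤ))) K]
      rw [Finset.sum_congr rfl
        (fun j (hj : j ∈ Finset.range K) => Finset.sum_range_succ (fun j' => g ((j:ℤ) - (j':ℤ))) K)]
      rw [Finset.sum_add_distrib]
      simp only [sub_self]
    rw [expand]
    have h1 : ∑ j ∈ Finset.range K, g ((j:ℤ) - (K:ℤ)) =
        ∑ j ∈ Finset.range K, g ((K:ℤ) - (j:ℤ)) := by
      refine Finset.sum_congr rfl fun j _ => ?_
      rw [← hg]; congr 1; ring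
    rw [h1, reflect_sum, ih]
    rw [Finset.sum_Icc_succ_top (by omega : 1 ≤ K + 1)]
    push_cast
    have hsplit : ∑ m ∈ Finset.Icc 1 K, ((K:ℂ) + 1 - (m:ℂ)) * g (m:ℤ)
        = ∑ m ∈ Finset.Icc 1 K, ((K:ℂ) - (m:ℂ)) * g (m:ℤ) + ∑ m ∈ Finset.Icc 1 K, g (m:ℤ) := by
      rw [← Finset.sum_add_distrib]
      refine Finset.sum_congr rfl fun m _ => ?_
      ring
    rw [hsplit]
    ring

/-- Second moment of the exponential sum over reduced residues mod `r`,
in terms of Ramanujan sums. -/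
theorem exp_sum_second_moment (N q r a : ℕ) (hN : 1 ≤ N) (hq : 2 ≤ q) (hr : 1 ≤ r)
    (hqr : Nat.gcd q r = 1) (ha : Nat.gcd a q = 1) :
    ∑ b ∈ (Finset.range r).filter (fun b => Nat.gcd b r = 1),
        Eqa N q a ((b : ℝ) / r) * (starRingEnd ℂ) (Eqa N q a ((b : ℝ) / r)) =
      (r.totient : ℂ) * ((progSet N q a).card : ℂ) +
        2 * ∑ m ∈ Finset.Icc 1 (progSet N q a).card,
          (((progSet N q a).card : ℂ) - (m : ℂ)) * ramanujanC r (q * m) := by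
  classical
  have hq0 : 0 < q := by omega
  have hr0q : a % q < q := Nat.mod_lt _ hq0
  have hr0pos : 1 ≤ a % q := by
    rcases Nat.eq_zero_or_pos (a % q) with h | h
    · exfalso
      have hdvd : q ∣ a := Nat.dvd_of_mod_eq_zero h
      have : Nat.gcd a q = q := Nat.gcd_eq_right hdvd
      omega
    · exact h
  set r0 := a % q with hr0def
  set K := (N + q - r0) / q with hKdef
  have hmem : ∀ j, j < K ↔ q * j + r0 ≤ N := by
    intro j
    have h1 : j < K ↔ (j + 1) * q ≤ N + q - r0 := by
      rw [hKdef, Nat.lt_iff_add_one_le, Nat.le_div_iff_mul_le hq0]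
    have h2 : (j + 1) * q = q * j + q := by ring
    rw [h2] at h1
    omega
  have hprog : progSet N q a = (Finset.range K).image (fun j => r0 + q * j) := by
    ext n
    simp only [progSet, Finset.mem_filter, Finset.mem_Icc, Finset.mem_image, Finset.mem_range]
    constructor
    · rintro ⟨⟨h1, h2⟩, h3⟩
      refine ⟨n / q, ?_, ?_⟩
      · rw [hmem]
        have := Nat.div_add_mod n q
        omega
      · have := Nat.div_add_mod n q
        omega
    · rintro ⟨j, hj, rfl⟩
      rw [hmem] at hj
      refine ⟨⟨by omega, by omega⟩, ?_⟩
      simp [Nat.add_mul_mod_self_left, Nat.mod_eq_of_lt hr0q, hr0def]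
  have hinj : Function.Injective (fun j => r0 + q * j) := by
    intro x y h
    simp only at h
    have hxy : q * x = q * y := by omega
    exact Nat.eq_of_mul_eq_mul_left hq0 hxy
  have hcard : (progSet N q a).card = K := by
    rw [hprog, Finset.card_image_of_injective _ hinj, Finset.card_range]
  set B := (Finset.range r).filter (fun b => Nat.gcd b r = 1) with hB
  set w : ℕ → ℂ := fun b => Complex.exp (2 * Real.pi * Complex.I * (b : ℂ) / (r : ℂ)) with hw
  have hw0 : ∀ b, w b ≠ 0 := fun b => Complex.exp_ne_zero _
  have hrC : (r : ℂ) ≠ 0 := Nat.cast_ne_zero.mpr (by omega)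
  -- Eqa as a geometric-type sum
  have hE : ∀ b : ℕ, Eqa N q a ((b : ℝ) / r) = ∑ j ∈ Finset.range K, w b ^ (r0 + q * j) := by
    intro b
    rw [Eqa, hprog, Finset.sum_image (fun x _ y _ h => hinj h)]
    refine Finset.sum_congr rfl fun j _ => ?_
    rw [show w b ^ (r0 + q * j)
        = Complex.exp (((r0 + q * j : ℕ) : ℂ) * (2 * Real.pi * Complex.I * (b : ℂ) / (r : ℂ)))
        from (Complex.exp_nat_mul _ _).symm]
    congr 1
    push_cast
    ring
  have hwconj : ∀ b : ℕ, (starRingEnd ℂ) (w b) = (w b)⁻¹ := by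
    intro b
    rw [hw]
    rw [← Complex.exp_conj, ← Complex.exp_neg]
    congr 1
    simp only [map_div₀, map_mul, Complex.conj_I, Complex.conj_ofReal, Complex.conj_natCast,
      map_ofNat]
    ring
  have hprod : ∀ b : ℕ,
      Eqa N q a ((b : ℝ) / r) * (starRingEnd ℂ) (Eqa N q a ((b : ℝ) / r)) =
      ∑ j ∈ Finset.range K, ∑ j' ∈ Finset.range K, w b ^ ((q : ℤ) * ((j : ℤ) - (j' : ℤ))) := by
    intro b
    rw [hE b, map_sum, Finset.sum_mul_sum]
    refine Finset.sum_congr rfl fun j _ => Finset.sum_congr rfl fun j' _ => ?_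
    rw [map_pow, hwconj, ← zpow_natCast (w b) (r0 + q * j), ← zpow_natCast (w b)⁻¹ (r0 + q * j'),
      inv_zpow, ← zpow_neg, ← zpow_add₀ (hw0 b)]
    congr 1
    push_cast
    ring
  -- evenness
  have hwval : ∀ b ∈ B, w ((r - b) % r) * w b = 1 := by
    intro b hb
    rw [hB, Finset.mem_filter, Finset.mem_range] at hb
    rcases Nat.eq_zero_or_pos b with rfl | hbpos
    · simp [hw, Nat.mod_self]
    · rw [Nat.mod_eq_of_lt (by omega), hw]
      simp only
      rw [← Complex.exp_add]
      rw [show (2 * (Real.pi : ℂ) * Complex.I * ((r - b : ℕ) : ℂ) / (r : ℂ)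
          + 2 * (Real.pi : ℂ) * Complex.I * (b : ℂ) / (r : ℂ)) = 2 * Real.pi * Complex.I by
        rw [Nat.cast_sub hb.1.le]
        field_simp
        ring]
      exact Complex.exp_two_pi_mul_I
  have hmemB : ∀ b ∈ B, (r - b) % r ∈ B := by
    intro b hb
    rw [hB, Finset.mem_filter, Finset.mem_range] at hb ⊢
    refine ⟨Nat.mod_lt _ (by omega), ?_⟩
    rcases Nat.eq_zero_or_pos b with rfl | hbpos
    · have hr1 : r = 1 := by simpa using hb.2
      subst hr1
      simp
    · rw [Nat.mod_eq_of_lt (by omega), Nat.gcd_self_sub_left hb.1.le]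
      exact hb.2
  have hinvol : ∀ b ∈ B, (r - (r - b) % r) % r = b := by
    intro b hb
    rw [hB, Finset.mem_filter, Finset.mem_range] at hb
    rcases Nat.eq_zero_or_pos b with rfl | hbpos
    · have hr1 : r = 1 := by simpa using hb.2
      subst hr1
      simp
    · have h1 : (r - b) % r = r - b := Nat.mod_eq_of_lt (by omega)
      rw [h1, show r - (r - b) = b by omega, Nat.mod_eq_of_lt hb.1]
  have hFeven : ∀ d : ℤ, ∑ b ∈ B, w b ^ (-d) = ∑ b ∈ B, w b ^ d := by
    intro d
    refine Finset.sum_nbij' (fun b => (r - b) % r) (fun b => (r - b) % r)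
      hmemB hmemB hinvol hinvol ?_
    intro b hb
    have h1 : w ((r - b) % r) = (w b)⁻¹ := eq_inv_of_mul_eq_one_left (hwval b hb)
    rw [h1, inv_zpow, ← zpow_neg]
  have hgeven : ∀ d : ℤ, (∑ b ∈ B, w b ^ ((q : ℤ) * (-d))) = ∑ b ∈ B, w b ^ ((q : ℤ) * d) := by
    intro d
    rw [show (q : ℤ) * (-d) = -((q : ℤ) * d) by ring]
    exact hFeven _
  have hg0 : (∑ b ∈ B, w b ^ ((q : ℤ) * (0 : ℤ))) = (r.totient : ℂ) := by
    simp only [mul_zero, zpow_zero, Finset.sum_const, nsmul_eq_mul, mul_one]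
    have hcardB : B.card = r.totient := by
      rw [hB, Nat.totient]
      congr 1
      refine Finset.filter_congr fun b _ => ?_
      exact ⟨fun h => Nat.Coprime.symm h, fun h => Nat.Coprime.symm h⟩
    rw [hcardB]
  have hgm : ∀ m : ℕ, (∑ b ∈ B, w b ^ ((q : ℤ) * (m : ℤ))) = ramanujanC r (q * m) := by
    intro m
    rw [ramanujanC, ← hB]
    refine Finset.sum_congr rfl fun b _ => ?_
    rw [show (q : ℤ) * (m : ℤ) = ((q * m : ℕ) : ℤ) by push_cast; ring, zpow_natCast]
    rw [show w b ^ (q * m)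
        = Complex.exp (((q * m : ℕ) : ℂ) * (2 * Real.pi * Complex.I * (b : ℂ) / (r : ℂ)))
        from (Complex.exp_nat_mul _ _).symm]
    congr 1
    push_cast
    ring
  rw [hcard]
  calc
    ∑ b ∈ B, Eqa N q a ((b : ℝ) / r) * (starRingEnd ℂ) (Eqa N q a ((b : ℝ) / r))
        = ∑ b ∈ B, ∑ j ∈ Finset.range K, ∑ j' ∈ Finset.range K,
            w b ^ ((q : ℤ) * ((j : ℤ) - (j' : ℤ))) :=
      Finset.sum_congr rfl fun b _ => hprod b
    _ = ∑ j ∈ Finset.range K, ∑ j' ∈ Finset.range K, ∑ b ∈ B,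
            w b ^ ((q : ℤ) * ((j : ℤ) - (j' : ℤ))) := by
      rw [Finset.sum_comm]
      exact Finset.sum_congr rfl fun j _ => Finset.sum_comm
    _ = (K : ℂ) * (∑ b ∈ B, w b ^ ((q : ℤ) * (0 : ℤ)))
          + 2 * ∑ m ∈ Finset.Icc 1 K, ((K : ℂ) - (m : ℂ)) * ∑ b ∈ B, w b ^ ((q : ℤ) * (m : ℤ)) :=
      count_aux (fun d => ∑ b ∈ B, w b ^ ((q : ℤ) * d)) hgeven K
    _ = (r.totient : ℂ) * (K : ℂ)
          + 2 * ∑ m ∈ Finset.Icc 1 K, ((K : ℂ) - (m : ℂ)) * ramanujanC r (q * m) := by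
      rw [hg0, mul_comm]
      congr 1
      refine congrArg (2 * ·) (Finset.sum_congr rfl fun m _ => ?_)
      rw [hgm m]
end

section
/- Let k ≥ 2 be a fixed integer. There exists a constant C = C(k) > 0 such that for all integers q ≥ 2 and N ≥ 1, every integer a coprime to q, every real y ≥ max(N/q, 2), and all pairwise distinct integers n_1,…,n_k ∈ [1,N] with n_i ≡ a (mod q) for all i: 𝔖({n_1,…,n_k};q) ≤ C (q/φ(q))^k (log y)^{k−1}. -/
open Finset Filter

/-- Number of residue classes mod `p` occupied by `D`. -/
def vpD (D : Finset ℕ) (p : ℕ) : ℕ := (D.image (· % p)).card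

/-- The singular series `𝔖(𝒟;q)`. -/
noncomputable def singSeries (D : Finset ℕ) (q : ℕ) : ℝ :=
  ((q : ℝ) / q.totient) ^ D.card *
    ∏' p : Nat.Primes, if ((p : ℕ) ∣ q) then 1
      else ((1 - 1 / ((p : ℕ) : ℝ))⁻¹) ^ D.card * (1 - (vpD D p : ℝ) / ((p : ℕ) : ℝ))

/-- The uniform Hardy–Littlewood conjecture with exponent saving `δ`. -/
def HL (δ : ℝ) : Prop :=
  0 < δ ∧ δ < 1 / 2 ∧ ∀ k : ℕ, 1 ≤ k → ∃ C : ℝ, 0 < C ∧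
    ∀ q N D : ℕ, 1 ≤ q → 1 ≤ N → 1 ≤ D →
      ∀ 𝒟 : Finset ℕ, 𝒟.card = k → (∀ d ∈ 𝒟, 0 < d ∧ d ≤ D ∧ q ∣ d) →
      |(∑ n ∈ (Finset.Icc 1 N).filter (fun n => Nat.gcd n q = 1),
          ∏ d ∈ 𝒟, ArithmeticFunction.vonMangoldt (n + d)) -
        singSeries 𝒟 q * ((Finset.Icc 1 N).filter (fun n => Nat.gcd n q = 1)).card| ≤
        C * (((N : ℝ) + D) ^ (1 - δ) : ℝ)

/-- Reduced residues modulo `q`. -/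
def residues (q : ℕ) : Finset ℕ := (Finset.range q).filter (fun a => Nat.gcd a q = 1)

/-- Gaussian moments `μ_k`. -/
noncomputable def gaussMoment (k : ℕ) : ℝ :=
  if Even k then (k.factorial : ℝ) / (2 ^ (k / 2) * (k / 2).factorial) else 0

/-- The constant `B_q`. -/
noncomputable def Bq (q : ℕ) : ℝ :=
  1 - Real.eulerMascheroniConstant - Real.log (2 * Real.pi) -
    ∑ p ∈ q.primeFactors, Real.log p / ((p : ℝ) - 1)

lemma inv_fac_eq (x : ℕ) (h2 : 2 ≤ x) : (1 - 1/(x:ℝ))⁻¹ = x/((x:ℝ)-1) := by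
  have : (2:ℝ) ≤ x := by exact_mod_cast h2
  rw [one_sub_div (by linarith), inv_div]

lemma inv_fac_pos (x : ℕ) (h2 : 2 ≤ x) : (0:ℝ) < (1 - 1/(x:ℝ))⁻¹ := by
  rw [inv_fac_eq x h2]
  have : (2:ℝ) ≤ x := by exact_mod_cast h2
  exact div_pos (by linarith) (by linarith)

lemma one_le_inv_fac (x : ℕ) (h2 : 2 ≤ x) : (1:ℝ) ≤ (1 - 1/(x:ℝ))⁻¹ := by
  rw [inv_fac_eq x h2]
  have : (2:ℝ) ≤ x := by exact_mod_cast h2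
  rw [le_div_iff₀ (by linarith)]; linarith

lemma my_tprod_le {ι : Type*} (f : ι → ℝ) (B : ℝ) (hB : 1 ≤ B)
    (h : ∀ s : Finset ι, ∏ i ∈ s, f i ≤ B) : ∏' i, f i ≤ B := by
  by_cases hf : Multipliable f
  · exact hasProd_le_of_prod_le hf.hasProd h
  · rw [tprod_eq_one_of_not_multipliable hf]; exact hB

lemma prod_primes_bound (t : Finset ℕ) (ht : ∀ p ∈ t, 2 ≤ p) :
    ∏ p ∈ t, (1 - 1/(p:ℝ))⁻¹ ≤ t.card + 1 := by
  induction t using Finset.strongInduction with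
  | _ t ih =>
    rcases t.eq_empty_or_nonempty with rfl | hne
    · simp
    · set p := t.max' hne with hp
      have hpt : p ∈ t := t.max'_mem hne
      have hp2 : 2 ≤ p := ht p hpt
      have hsub : t ⊆ Finset.Icc 2 p := fun x hx =>
        Finset.mem_Icc.mpr ⟨ht x hx, t.le_max' x hx⟩
      have hcard : t.card ≤ p - 1 := by
        have := Finset.card_le_card hsub
        simpa [Nat.card_Icc] using this
      have hcard' : t.card + 1 ≤ p := by omega
      have herase := ih (t.erase p) (Finset.erase_ssubset hpt)
        (fun x hx => ht x (Finset.mem_of_mem_erase hx))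
      rw [← Finset.prod_erase_mul t _ hpt]
      have hce : (t.erase p).card = t.card - 1 := Finset.card_erase_of_mem hpt
      have hc1 : 1 ≤ t.card := Finset.card_pos.mpr hne
      rw [hce] at herase
      have hpR : (2:ℝ) ≤ p := by exact_mod_cast hp2
      have hprodle : ∏ x ∈ t.erase p, (1 - 1/(x:ℝ))⁻¹ ≤ (t.card : ℝ) := by
        have : ((t.card - 1 : ℕ) : ℝ) + 1 ≤ (t.card : ℝ) := by
          push_cast [Nat.cast_sub hc1]; linarith
        linarith
      have hprodnn : (0:ℝ) ≤ ∏ x ∈ t.erase p, (1 - 1/(x:ℝ))⁻¹ :=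
        Finset.prod_nonneg fun x hx =>
          (inv_fac_pos x (ht x (Finset.mem_of_mem_erase hx))).le
      have hfacpos := inv_fac_pos p hp2
      calc (∏ x ∈ t.erase p, (1 - 1/(x:ℝ))⁻¹) * ((1 - 1/(p:ℝ))⁻¹)
            ≤ (t.card : ℝ) * ((1 - 1/(p:ℝ))⁻¹) :=
              mul_le_mul_of_nonneg_right hprodle hfacpos.le
          _ ≤ (t.card : ℝ) + 1 := by
              rw [inv_fac_eq p hp2]
              have hr : (1:ℝ) ≤ t.card := by exact_mod_cast hc1
              have hrp : (t.card : ℝ) + 1 ≤ p := by exact_mod_cast hcard'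
              rw [mul_div_assoc', div_le_iff₀ (by linarith)]
              nlinarith

lemma omega_le (m : ℕ) (hm : m ≠ 0) :
    (m.primeFactors.card : ℝ) * Real.log 2 ≤ Real.log m := by
  have h2 : 2 ^ m.primeFactors.card ≤ m := by
    calc 2 ^ m.primeFactors.card = ∏ _p ∈ m.primeFactors, 2 := by
          rw [Finset.prod_const]
      _ ≤ ∏ p ∈ m.primeFactors, p :=
          Finset.prod_le_prod' fun p hp => (Nat.prime_of_mem_primeFactors hp).two_le
      _ ≤ m := Nat.le_of_dvd (Nat.pos_of_ne_zero hm) (Nat.prod_primeFactors_dvd m)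
  have := Real.log_le_log (by positivity)
    (show ((2:ℝ) ^ m.primeFactors.card : ℝ) ≤ m by exact_mod_cast h2)
  rwa [Real.log_pow] at this

/-- Pointwise upper bound for the singular series of a tuple in a progression
(equation (2.4)). -/
theorem singSeries_pointwise_bound (k : ℕ) (hk : 2 ≤ k) :
    ∃ C : ℝ, 0 < C ∧ ∀ q N a : ℕ, 2 ≤ q → 1 ≤ N → Nat.gcd a q = 1 →
      ∀ y : ℝ, max ((N : ℝ) / q) 2 ≤ y →
      ∀ n : Fin k → ℕ, Function.Injective n →
        (∀ i, n i ∈ Finset.Icc 1 N ∧ n i % q = a % q) →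
        singSeries (Finset.image n Finset.univ) q ≤
          C * ((q : ℝ) / q.totient) ^ k * (Real.log y) ^ (k - 1) := by
  have hlog2 : (0:ℝ) < Real.log 2 := Real.log_pos one_lt_two
  refine ⟨(((k:ℝ)+1)/Real.log 2)^(k-1), pow_pos (div_pos (by positivity) hlog2) _, ?_⟩
  intro q N a hq hN _ha y hy n hinj hn
  have hq0 : 0 < q := by omega
  haveI : NeZero k := ⟨by omega⟩
  have hy2 : (2:ℝ) ≤ y := le_trans (le_max_right _ _) hy
  have hy1 : (1:ℝ) ≤ y := by linarith
  have hyN : (N:ℝ)/q ≤ y := le_trans (le_max_left _ _) hy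
  have hlogy : Real.log 2 ≤ Real.log y := Real.log_le_log (by norm_num) hy2
  have hlogy0 : (0:ℝ) < Real.log y := lt_of_lt_of_le hlog2 hlogy
  set D := Finset.image n Finset.univ with hDdef
  have hD : D.card = k := by
    rw [hDdef, Finset.card_image_of_injective _ hinj, Finset.card_univ, Fintype.card_fin]
  -- the pair quantities
  set m : Fin k → Fin k → ℕ := fun i j => ((n i : ℤ) - n j).natAbs / q with hmdef
  have hqd : ∀ i j : Fin k, q ∣ ((n i : ℤ) - n j).natAbs := by
    intro i j
    have hmod : n j ≡ n i [MOD q] := ((hn j).2).trans ((hn i).2).symm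
    have : (q:ℤ) ∣ (n i : ℤ) - n j := (Nat.modEq_iff_dvd).mp hmod
    have := Int.natAbs_dvd_natAbs.mpr this
    simpa using this
  have hmmul : ∀ i j : Fin k, m i j * q = ((n i : ℤ) - n j).natAbs := fun i j =>
    Nat.div_mul_cancel (hqd i j)
  have hm1 : ∀ i j : Fin k, i ≠ j → 1 ≤ m i j := by
    intro i j hij
    have hne : ((n i : ℤ) - n j) ≠ 0 := by
      intro h
      exact hij (hinj (by exact_mod_cast sub_eq_zero.mp h))
    have h0 : ((n i : ℤ) - n j).natAbs ≠ 0 := Int.natAbs_ne_zero.mpr hne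
    have := Nat.le_of_dvd (Nat.pos_of_ne_zero h0) (hqd i j)
    exact Nat.one_le_div_iff hq0 |>.mpr this
  have hmy : ∀ i j : Fin k, (m i j : ℝ) ≤ y := by
    intro i j
    have hiN := Finset.mem_Icc.mp (hn i).1
    have hjN := Finset.mem_Icc.mp (hn j).1
    have hqR : (0:ℝ) < q := by exact_mod_cast hq0
    have habs : ((n i : ℤ) - n j).natAbs ≤ N := by
      have : |(n i : ℤ) - n j| ≤ (N:ℤ) := by
        rw [abs_le]
        constructor <;> (push_cast; omega)
      exact Int.ofNat_le.mp (by rwa [Int.natCast_natAbs])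
    calc (m i j : ℝ) ≤ (((n i : ℤ) - n j).natAbs : ℝ) / q := Nat.cast_div_le
      _ ≤ (N:ℝ)/q := by
          have : (((n i : ℤ) - n j).natAbs : ℝ) ≤ N := by exact_mod_cast habs
          gcongr
      _ ≤ y := hyN
  -- products of pair quantities
  set M : Fin k → ℕ := fun i => ∏ j ∈ Finset.univ.filter (· < i), m i j with hMdef
  have hM1 : ∀ i, 1 ≤ M i := by
    intro i
    apply Finset.one_le_prod'
    intro j hj
    exact hm1 i j (Finset.mem_filter.mp hj).2.ne'
  have hMy : ∀ i, (M i : ℝ) ≤ y ^ k := by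
    intro i
    rw [hMdef]
    push_cast
    calc ∏ j ∈ Finset.univ.filter (· < i), (m i j : ℝ)
        ≤ ∏ _j ∈ Finset.univ.filter (· < i), y :=
          Finset.prod_le_prod (fun j _ => by positivity) (fun j _ => hmy i j)
      _ = y ^ (Finset.univ.filter (· < i)).card := by rw [Finset.prod_const]
      _ ≤ y ^ k := pow_le_pow_right₀ hy1 (le_trans (Finset.card_le_card
            (Finset.subset_univ _)) (by simp))
  -- index sets
  set A : Finset (Fin k) := Finset.univ.erase (0 : Fin k) with hAdef
  have hAcard : A.card = k - 1 := by
    rw [hAdef, Finset.card_erase_of_mem (Finset.mem_univ _), Finset.card_univ,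
      Fintype.card_fin]
  -- the tprod integrand
  set f : Nat.Primes → ℝ := fun p => if ((p : ℕ) ∣ q) then 1
      else ((1 - 1 / ((p : ℕ) : ℝ))⁻¹) ^ k * (1 - (vpD D p : ℝ) / ((p : ℕ) : ℝ)) with hfdef
  set g : Nat.Primes → ℝ := fun p => ∏ i ∈ A,
      (if ((p : ℕ) ∣ q ∨ ¬ (p : ℕ) ∣ M i) then (1:ℝ) else (1 - 1/((p:ℕ):ℝ))⁻¹) with hgdef
  have hf0 : ∀ p : Nat.Primes, 0 ≤ f p := by
    intro p
    rw [hfdef]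
    by_cases hpq : (p:ℕ) ∣ q
    · simp [hpq]
    · simp only [hpq, if_false]
      have hP2 : 2 ≤ (p:ℕ) := p.2.two_le
      have hvp : vpD D (p:ℕ) ≤ (p:ℕ) := by
        have : D.image (· % (p:ℕ)) ⊆ Finset.range (p:ℕ) := by
          intro x hx
          obtain ⟨d, _, rfl⟩ := Finset.mem_image.mp hx
          exact Finset.mem_range.mpr (Nat.mod_lt d (by omega))
        simpa [vpD] using le_trans (Finset.card_le_card this) (by simp)
      have h1 : (0:ℝ) ≤ 1 - (vpD D (p:ℕ) : ℝ) / ((p:ℕ):ℝ) := by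
        rw [sub_nonneg, div_le_one (by positivity)]
        exact_mod_cast hvp
      exact mul_nonneg (pow_nonneg (inv_fac_pos _ hP2).le _) h1
  have hfg : ∀ p : Nat.Primes, f p ≤ g p := by
    intro p
    by_cases hpq : (p:ℕ) ∣ q
    · simp [hfdef, hgdef, hpq]
    · set P := (p:ℕ) with hPdef
      have hP2 : 2 ≤ P := p.2.two_le
      set S : Finset (Fin k) := A.filter (fun i => P ∣ M i) with hSdef
      -- collision counting
      have key : ∀ i j : Fin k, j < i → n i % P = n j % P → i ∈ S := by
        intro i j hji heq
        have hi0 : i ≠ 0 := by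
          intro h0
          rw [h0] at hji
          simp [Fin.lt_def] at hji
        have hdvd : (P:ℤ) ∣ ((n i : ℤ) - n j) := by
          have hmod : n j ≡ n i [MOD P] := heq.symm
          exact (Nat.modEq_iff_dvd).mp hmod
        have hdN : P ∣ ((n i : ℤ) - n j).natAbs := by
          have := Int.natAbs_dvd_natAbs.mpr hdvd
          simpa using this
        rw [← hmmul i j] at hdN
        rcases (Nat.Prime.dvd_mul p.2).mp hdN with hPm | hPq
        · have hmM : m i j ∣ M i :=
            Finset.dvd_prod_of_mem _ (Finset.mem_filter.mpr ⟨Finset.mem_univ _, hji⟩)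
          exact Finset.mem_filter.mpr ⟨Finset.mem_erase.mpr ⟨hi0, Finset.mem_univ _⟩,
            hPm.trans hmM⟩
        · exact absurd hPq hpq
      have hvlow : k - S.card ≤ vpD D P := by
        have hinjOn : Set.InjOn (fun i => n i % P) ↑(Finset.univ \ S) := by
          intro i hi j hj hij
          by_contra hne
          simp only [Finset.coe_sdiff, Set.mem_diff, Finset.mem_coe] at hi hj
          rcases Ne.lt_or_gt hne with h | h
          · exact hj.2 (key j i h hij.symm)
          · exact hi.2 (key i j h hij)
        have h1 : (Finset.univ \ S).card =
            ((Finset.univ \ S).image (fun i => n i % P)).card :=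
          (Finset.card_image_of_injOn hinjOn).symm
        have h2 : ((Finset.univ \ S).image (fun i => n i % P)).card ≤
            (Finset.univ.image (fun i : Fin k => n i % P)).card :=
          Finset.card_le_card (Finset.image_subset_image (Finset.sdiff_subset))
        have h3 : (Finset.univ.image (fun i : Fin k => n i % P)).card = vpD D P := by
          rw [vpD, hDdef, Finset.image_image]
          rfl
        have h4 : (Finset.univ \ S).card = k - S.card := by
          rw [Finset.card_sdiff_of_subset (Finset.subset_univ _), Finset.card_univ, Fintype.card_fin]
        omega
      -- pointwise bound
      set x : ℝ := (1 - 1/(P:ℝ))⁻¹ with hxdef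
      have hx1 : 1 ≤ x := one_le_inv_fac P hP2
      have hx0 : 0 < x := inv_fac_pos P hP2
      have hPR : (2:ℝ) ≤ P := by exact_mod_cast hP2
      set v := vpD D P with hvdef
      have hvk : v ≤ k := by
        rw [hvdef, vpD, ← hD]
        exact Finset.card_image_le
      have step1 : (1 - (v:ℝ)/P) ≤ (1 - 1/(P:ℝ))^v := by
        have := one_add_mul_le_pow (a := -(1/(P:ℝ))) (by
          have h1 : (0:ℝ) < (P:ℝ) := by linarith
          have h2 : 1/(P:ℝ) ≤ 1 := by rw [div_le_one h1]; linarith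
          linarith) v
        calc (1 - (v:ℝ)/P) = 1 + (v:ℝ) * (-(1/(P:ℝ))) := by ring
          _ ≤ (1 + (-(1/(P:ℝ))))^v := this
          _ = (1 - 1/(P:ℝ))^v := by ring_nf
      have hsub0 : (0:ℝ) < 1 - 1/(P:ℝ) := by
        rw [sub_pos, div_lt_one (by linarith)]; linarith
      have step2 : x^k * (1 - 1/(P:ℝ))^v = x^(k-v) := by
        rw [hxdef, inv_pow, pow_sub₀ _ (by positivity) hvk]
        field_simp
        rw [← inv_div ((P:ℝ)-1) (P:ℝ), inv_pow, inv_pow, inv_div_inv]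
      have step3 : x^(k-v) ≤ x^S.card :=
        pow_le_pow_right₀ hx1 (by omega)
      have hcongr : ∀ i ∈ A, (if ((p:ℕ) ∣ q ∨ ¬ (p:ℕ) ∣ M i) then (1:ℝ) else x) =
          (if P ∣ M i then x else 1) := by
        intro i _
        by_cases h : P ∣ M i <;> simp [hpq, h, ← hPdef]
      have step4 : g p = x^S.card := by
        show (∏ i ∈ A, if ((p:ℕ) ∣ q ∨ ¬ (p:ℕ) ∣ M i) then (1:ℝ)
          else (1 - 1/((p:ℕ):ℝ))⁻¹) = x ^ S.card
        rw [Finset.prod_congr rfl hcongr, Finset.prod_ite, Finset.prod_const,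
          Finset.prod_const, one_pow, mul_one]
      have hLHS : f p = x^k * (1 - (v:ℝ)/P) := by
        rw [hfdef]; exact if_neg hpq
      calc f p = x^k * (1 - (v:ℝ)/P) := hLHS
        _ ≤ x^k * (1 - 1/(P:ℝ))^v := mul_le_mul_of_nonneg_left step1 (by positivity)
        _ = x^(k-v) := step2
        _ ≤ x^S.card := step3
        _ = g p := step4.symm
  -- the scalar bound
  set c : ℝ := ((k:ℝ)+1)/Real.log 2 * Real.log y with hcdef
  have hk1R : (1:ℝ) ≤ (k:ℝ)+1 := by
    have : (0:ℝ) ≤ (k:ℝ) := Nat.cast_nonneg k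
    linarith
  have hc1 : 1 ≤ c := by
    have h1 : ((k:ℝ)+1)/Real.log 2 * Real.log 2 ≤ c :=
      mul_le_mul_of_nonneg_left hlogy (by positivity)
    rw [div_mul_cancel₀ _ (ne_of_gt hlog2)] at h1
    linarith
  -- inner product bound for each i
  have hinner : ∀ i : Fin k, ∀ s : Finset Nat.Primes,
      ∏ p ∈ s, (if ((p:ℕ) ∣ q ∨ ¬ (p:ℕ) ∣ M i) then (1:ℝ)
        else (1 - 1/((p:ℕ):ℝ))⁻¹) ≤ c := by
    intro i s
    have hMi0 : M i ≠ 0 := by have := hM1 i; omega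
    set s' := s.filter (fun p : Nat.Primes => ¬((p:ℕ) ∣ q ∨ ¬ (p:ℕ) ∣ M i)) with hs'
    have h1 : ∏ p ∈ s, (if ((p:ℕ) ∣ q ∨ ¬ (p:ℕ) ∣ M i) then (1:ℝ)
        else (1 - 1/((p:ℕ):ℝ))⁻¹) = ∏ p ∈ s', (1 - 1/((p:ℕ):ℝ))⁻¹ := by
      rw [Finset.prod_ite, Finset.prod_const, one_pow, one_mul]
    set t := s'.image (fun p : Nat.Primes => (p:ℕ)) with ht
    have h2 : ∏ p ∈ s', (1 - 1/((p:ℕ):ℝ))⁻¹ = ∏ r ∈ t, (1 - 1/(r:ℝ))⁻¹ := by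
      rw [ht]
      exact (Finset.prod_image (f := fun r : ℕ => (1 - 1/(r:ℝ))⁻¹) (g := fun p : Nat.Primes => (p:ℕ))
        (fun p _ p' _ h => Subtype.ext h)).symm
    have h3 : t ⊆ (M i).primeFactors := by
      intro r hr
      obtain ⟨p, hp, rfl⟩ := Finset.mem_image.mp hr
      have hp' := (Finset.mem_filter.mp hp).2
      push_neg at hp'
      exact Nat.mem_primeFactors.mpr ⟨p.2, hp'.2, hMi0⟩
    have hone : ∀ r ∈ (M i).primeFactors, (1:ℝ) ≤ (1-1/(r:ℝ))⁻¹ := fun r hr =>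
      one_le_inv_fac r (Nat.prime_of_mem_primeFactors hr).two_le
    have h4 : ∏ r ∈ t, (1-1/(r:ℝ))⁻¹ ≤ ∏ r ∈ (M i).primeFactors, (1-1/(r:ℝ))⁻¹ := by
      rw [← Finset.prod_sdiff h3]
      have ha : (1:ℝ) ≤ ∏ r ∈ (M i).primeFactors \ t, (1-1/(r:ℝ))⁻¹ := by
        calc (1:ℝ) = ∏ _r ∈ (M i).primeFactors \ t, (1:ℝ) := by simp
          _ ≤ ∏ r ∈ (M i).primeFactors \ t, (1-1/(r:ℝ))⁻¹ :=
            Finset.prod_le_prod (fun r _ => by norm_num)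
              (fun r hr => hone r (Finset.mem_sdiff.mp hr).1)
      have hb : (0:ℝ) ≤ ∏ r ∈ t, (1-1/(r:ℝ))⁻¹ :=
        Finset.prod_nonneg (fun r hr => by have := hone r (h3 hr); linarith)
      exact le_mul_of_one_le_left hb ha
    have h5 := prod_primes_bound (M i).primeFactors
        (fun r hr => (Nat.prime_of_mem_primeFactors hr).two_le)
    have h6 : ((M i).primeFactors.card : ℝ) * Real.log 2 ≤ (k:ℝ) * Real.log y := by
      have ho := omega_le (M i) hMi0
      have hlM : Real.log (M i) ≤ (k:ℝ) * Real.log y := by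
        have hMpos : (0:ℝ) < (M i : ℝ) := by exact_mod_cast Nat.pos_of_ne_zero hMi0
        have := Real.log_le_log hMpos (hMy i)
        rwa [Real.log_pow] at this
      linarith
    have h7 : ((M i).primeFactors.card : ℝ) + 1 ≤ c := by
      have hceq : c = ((k:ℝ)*Real.log y + Real.log y)/Real.log 2 := by
        rw [hcdef]; field_simp
      rw [hceq, le_div_iff₀ hlog2]
      have : (1:ℝ) * Real.log 2 ≤ Real.log y := by linarith
      nlinarith [h6, hlogy, hlog2]
    calc ∏ p ∈ s, (if ((p:ℕ) ∣ q ∨ ¬ (p:ℕ) ∣ M i) then (1:ℝ)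
          else (1 - 1/((p:ℕ):ℝ))⁻¹)
        = ∏ r ∈ t, (1 - 1/(r:ℝ))⁻¹ := by rw [h1, h2]
      _ ≤ ∏ r ∈ (M i).primeFactors, (1-1/(r:ℝ))⁻¹ := h4
      _ ≤ ((M i).primeFactors.card : ℝ) + 1 := h5
      _ ≤ c := h7
  -- partial products of f are bounded
  have hprodB : ∀ s : Finset Nat.Primes, ∏ p ∈ s, f p ≤ c ^ (k-1) := by
    intro s
    have h1 : ∏ p ∈ s, f p ≤ ∏ p ∈ s, g p :=
      Finset.prod_le_prod (fun p _ => hf0 p) (fun p _ => hfg p)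
    have h2 : ∏ p ∈ s, g p = ∏ i ∈ A, ∏ p ∈ s,
        (if ((p:ℕ) ∣ q ∨ ¬ (p:ℕ) ∣ M i) then (1:ℝ) else (1 - 1/((p:ℕ):ℝ))⁻¹) := by
      rw [hgdef]; exact Finset.prod_comm
    have h3 : ∏ i ∈ A, (∏ p ∈ s,
        (if ((p:ℕ) ∣ q ∨ ¬ (p:ℕ) ∣ M i) then (1:ℝ) else (1 - 1/((p:ℕ):ℝ))⁻¹))
        ≤ ∏ _i ∈ A, c := by
      apply Finset.prod_le_prod
      · intro i _
        apply Finset.prod_nonneg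
        intro p _
        by_cases h : ((p:ℕ) ∣ q ∨ ¬ (p:ℕ) ∣ M i)
        · simp [h]
        · simp only [h, if_false]
          exact (inv_fac_pos _ p.2.two_le).le
      · intro i _
        exact hinner i s
    rw [Finset.prod_const, hAcard] at h3
    calc ∏ p ∈ s, f p ≤ ∏ p ∈ s, g p := h1
      _ = _ := h2
      _ ≤ c ^ (k-1) := h3
  have hB1 : (1:ℝ) ≤ c ^ (k-1) := one_le_pow₀ hc1
  have htprod : (∏' p, f p) ≤ c ^ (k-1) := my_tprod_le f _ hB1 hprodB
  have hQ : (0:ℝ) ≤ ((q:ℝ)/q.totient)^k := by positivity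
  have hsing : singSeries D q = ((q:ℝ)/q.totient)^k * ∏' p, f p := by
    rw [hfdef, singSeries]
    simp only [hD]
  calc singSeries D q = ((q:ℝ)/q.totient)^k * ∏' p, f p := hsing
    _ ≤ ((q:ℝ)/q.totient)^k * c^(k-1) := mul_le_mul_of_nonneg_left htprod hQ
    _ = (((k:ℝ)+1)/Real.log 2)^(k-1) * ((q:ℝ)/q.totient)^k * (Real.log y)^(k-1) := by
        rw [hcdef, mul_pow]; ring
end
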